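/- Let N ≥ 1, let S ⊆ ℝ^N be compact, let h ∈ B_S, let D_1, …, D_M ⊆ ℝ^N be bounded measurable sets each with nonempty interior, and let ω_1, …, ω_M ∈ (0,1] with ω_1 + ⋯ + ω_M = 1. Define T_h f = Σ_{m=1}^M ω_m P_S(f + χ_{D_m}(h − f)). Then h is the unique fixed point of T_h in B_S: T_h h = h, and any f ∈ B_S with T_h f = f equals h almost everywhere. -/

import Mathlib

open MeasureTheory FourierTransform Filter

set_option maxHeartbeats 1000000

noncomputable section

section FPAuxSection

open Real Complex

variable {N : ℕ}

lemma FP_entire_aux {F : EuclideanSpace ℝ (Fin N) → ℂ} (hF : Integrable F) {C : ℝ} (hC : 0 ≤ C)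
    {α β : EuclideanSpace ℝ (Fin N) → ℝ} (hα : Continuous α) (hβ : Continuous β)
    (hβC : ∀ k, F k ≠ 0 → |β k| ≤ C) :
    Differentiable ℂ fun z : ℂ =>
      ∫ k, Complex.exp ((α k : ℂ) * Complex.I + z * ((β k : ℂ) * Complex.I)) * F k := by
  intro z₀
  have hre : ∀ (z : ℂ) (r s : ℝ), ((r:ℂ) * Complex.I + z * ((s:ℂ) * Complex.I)).re
      = -(z.im * s) := by
    intro z r s
    simp [Complex.mul_re]
  have hcont : ∀ z : ℂ, Continuous fun k : EuclideanSpace ℝ (Fin N) =>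
      Complex.exp ((α k : ℂ) * Complex.I + z * ((β k : ℂ) * Complex.I)) := by
    intro z
    fun_prop
  have key := hasDerivAt_integral_of_dominated_loc_of_deriv_le (μ := (volume : Measure (EuclideanSpace ℝ (Fin N))))
    (F := fun z k => Complex.exp ((α k : ℂ) * Complex.I + z * ((β k : ℂ) * Complex.I)) * F k)
    (F' := fun z k => Complex.exp ((α k : ℂ) * Complex.I + z * ((β k : ℂ) * Complex.I))
        * ((β k : ℂ) * Complex.I) * F k)
    (x₀ := z₀) (bound := fun k => (Real.exp (C * (‖z₀‖ + 1)) * C) * ‖F k‖)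
    (Metric.ball_mem_nhds z₀ one_pos)
    (Filter.Eventually.of_forall fun z => ((hcont z).aestronglyMeasurable).mul hF.1)
    ?_ ?_ ?_ ?_ ?_
  · exact key.2.differentiableAt
  · -- Integrable (F z₀)
    refine (hF.norm.const_mul (Real.exp (C * (‖z₀‖ + 1)))).mono'
      (((hcont z₀).aestronglyMeasurable).mul hF.1) (Filter.Eventually.of_forall fun k => ?_)
    rcases eq_or_ne (F k) 0 with h | h
    · simp [h]
    · have h1 : ‖Complex.exp ((α k : ℂ) * Complex.I + z₀ * ((β k : ℂ) * Complex.I))‖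
          ≤ Real.exp (C * (‖z₀‖ + 1)) := by
        rw [Complex.norm_exp, hre]
        apply Real.exp_le_exp.2
        calc -(z₀.im * β k) ≤ |z₀.im * β k| := neg_le_abs _
          _ = |z₀.im| * |β k| := abs_mul _ _
          _ ≤ ‖z₀‖ * C := by
              apply mul_le_mul (Complex.abs_im_le_norm z₀) (hβC k h) (abs_nonneg _)
                (norm_nonneg z₀)
          _ ≤ C * (‖z₀‖ + 1) := by nlinarith [norm_nonneg z₀]
      calc ‖_ * F k‖ = ‖Complex.exp _‖ * ‖F k‖ := norm_mul _ _
        _ ≤ Real.exp (C * (‖z₀‖ + 1)) * ‖F k‖ :=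
            mul_le_mul_of_nonneg_right h1 (norm_nonneg _)
  · -- AESM F' z₀
    exact (((hcont z₀).mul (by fun_prop)).aestronglyMeasurable).mul hF.1
  · -- bound
    refine Filter.Eventually.of_forall fun k => fun z hz => ?_
    rcases eq_or_ne (F k) 0 with h | h
    · simp [h]
    · have hz1 : ‖z‖ ≤ ‖z₀‖ + 1 := by
        have := mem_ball_iff_norm.1 hz
        calc ‖z‖ = ‖z₀ + (z - z₀)‖ := by ring_nf
          _ ≤ ‖z₀‖ + ‖z - z₀‖ := norm_add_le _ _
          _ ≤ ‖z₀‖ + 1 := by linarith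
      have h1 : ‖Complex.exp ((α k : ℂ) * Complex.I + z * ((β k : ℂ) * Complex.I))‖
          ≤ Real.exp (C * (‖z₀‖ + 1)) := by
        rw [Complex.norm_exp, hre]
        apply Real.exp_le_exp.2
        calc -(z.im * β k) ≤ |z.im * β k| := neg_le_abs _
          _ = |z.im| * |β k| := abs_mul _ _
          _ ≤ ‖z‖ * C := mul_le_mul (Complex.abs_im_le_norm z) (hβC k h) (abs_nonneg _)
              (norm_nonneg z)
          _ ≤ (‖z₀‖ + 1) * C := mul_le_mul_of_nonneg_right hz1 hC
          _ = C * (‖z₀‖ + 1) := by ring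
      have h2 : ‖(β k : ℂ) * Complex.I‖ ≤ C := by
        rw [norm_mul, Complex.norm_I, mul_one, Complex.norm_real, Real.norm_eq_abs]
        exact hβC k h
      calc ‖_ * ((β k : ℂ) * Complex.I) * F k‖
          = ‖Complex.exp _‖ * ‖(β k : ℂ) * Complex.I‖ * ‖F k‖ := by
            rw [norm_mul, norm_mul]
        _ ≤ Real.exp (C * (‖z₀‖ + 1)) * C * ‖F k‖ := by
            apply mul_le_mul_of_nonneg_right _ (norm_nonneg _)
            exact mul_le_mul h1 h2 (norm_nonneg _) (Real.exp_nonneg _)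
        _ = (Real.exp (C * (‖z₀‖ + 1)) * C) * ‖F k‖ := rfl
  · -- bound integrable
    exact hF.norm.const_mul _
  · -- h_diff
    refine Filter.Eventually.of_forall fun k => fun z _ => ?_
    have h1 : HasDerivAt (fun z : ℂ => (α k : ℂ) * Complex.I + z * ((β k : ℂ) * Complex.I))
        ((β k : ℂ) * Complex.I) z := by
      simpa using (hasDerivAt_id z).mul_const ((β k : ℂ) * Complex.I) |>.const_add
        ((α k : ℂ) * Complex.I)
    exact (h1.cexp).mul_const (F k)

lemma FP_entire_zero {L : ℂ → ℂ} (hL : Differentiable ℂ L)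
    {δ : ℝ} (hδ : 0 < δ) (h0 : ∀ t : ℝ, 0 ≤ t → t ≤ δ → L t = 0) (z : ℂ) : L z = 0 := by
  have hA : AnalyticOnNhd ℂ L Set.univ :=
    hL.differentiableOn.analyticOnNhd isOpen_univ
  have hfreq : ∃ᶠ w in nhdsWithin (0 : ℂ) {(0:ℂ)}ᶜ, L w = 0 := by
    have htt : Filter.Tendsto (fun n : ℕ => ((δ / (n + 1) : ℝ) : ℂ)) Filter.atTop
        (nhdsWithin (0 : ℂ) {(0:ℂ)}ᶜ) := by
      apply tendsto_nhdsWithin_of_tendsto_nhds_of_eventually_within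
      · have h1 : Filter.Tendsto (fun n : ℕ => δ / (n + 1 : ℝ)) Filter.atTop (nhds 0) := by
          simpa using tendsto_one_div_add_atTop_nhds_zero_nat.const_mul δ |>.congr
            (fun n => by field_simp)
        have h2 := (Complex.continuous_ofReal.tendsto 0).comp h1
        simp only [Complex.ofReal_zero] at h2
        exact h2
      · refine Filter.Eventually.of_forall fun n => ?_
        have : (0:ℝ) < δ / (n + 1) := by positivity
        simp only [Set.mem_compl_iff, Set.mem_singleton_iff]
        exact_mod_cast ne_of_gt (by exact_mod_cast this)
    refine htt.frequently (Filter.Frequently.of_forall fun n => ?_)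
    apply h0
    · positivity
    · apply div_le_self hδ.le
      have : (0:ℝ) ≤ (n:ℝ) := n.cast_nonneg
      linarith
  have := hA.eqOn_zero_of_preconnected_of_frequently_eq_zero isPreconnected_univ
    (Set.mem_univ (0:ℂ)) hfreq
  exact this (Set.mem_univ z)

lemma FP_cont_eq_zero_on_interior {NN : ℕ} {G : EuclideanSpace ℝ (Fin NN) → ℂ} (hG : Continuous G)
    {D : Set (EuclideanSpace ℝ (Fin NN))} (hae : ∀ᵐ x, x ∈ D → G x = 0)
    {x : EuclideanSpace ℝ (Fin NN)} (hx : x ∈ interior D) : G x = 0 := by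
  by_contra hne
  have hV : IsOpen (interior D ∩ {y | G y ≠ 0}) :=
    isOpen_interior.inter (isOpen_compl_iff.2 (isClosed_eq hG continuous_const))
  have hpos : 0 < volume (interior D ∩ {y | G y ≠ 0}) :=
    hV.measure_pos volume ⟨x, hx, hne⟩
  have hz : volume (interior D ∩ {y | G y ≠ 0}) = 0 := by
    refine measure_mono_null ?_ (ae_iff.1 hae)
    rintro y ⟨hy1, hy2⟩
    simp only [Set.mem_setOf_eq, Classical.not_imp]
    exact ⟨interior_subset hy1, hy2⟩
  exact hpos.ne' hz

lemma FP_fourierInv_zero_everywhere {F : EuclideanSpace ℝ (Fin N) → ℂ}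
    (hF : Integrable F) {R : ℝ} (hR : ∀ k, F k ≠ 0 → ‖k‖ ≤ R)
    {c : EuclideanSpace ℝ (Fin N)} {ε : ℝ} (hε : 0 < ε)
    (hzero : ∀ v ∈ Metric.ball c ε, 𝓕⁻ F v = 0) (x : EuclideanSpace ℝ (Fin N)) :
    𝓕⁻ F x = 0 := by
  by_cases hxc : x = c
  · exact hxc ▸ hzero c (Metric.mem_ball_self hε)
  set b := x - c with hb
  have hbne : ‖b‖ ≠ 0 := by
    simpa [hb, sub_eq_zero] using hxc
  have hbpos : 0 < ‖b‖ := (norm_nonneg b).lt_of_ne' hbne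
  set α : EuclideanSpace ℝ (Fin N) → ℝ := fun k => 2 * π * (inner ℝ k c : ℝ) with hα
  set β : EuclideanSpace ℝ (Fin N) → ℝ := fun k => 2 * π * (inner ℝ k b : ℝ) with hβ
  set L : ℂ → ℂ := fun z =>
      ∫ k, Complex.exp ((α k : ℂ) * Complex.I + z * ((β k : ℂ) * Complex.I)) * F k with hL
  have hLd : Differentiable ℂ L := by
    refine FP_entire_aux hF (C := 2 * π * |R| * ‖b‖) (by positivity) ?_ ?_ ?_
    · exact continuous_const.mul (continuous_id.inner continuous_const)
    · exact continuous_const.mul (continuous_id.inner continuous_const)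
    · intro k hk
      have h1 : ‖k‖ ≤ R := hR k hk
      have h2 : |(inner ℝ k b : ℝ)| ≤ ‖k‖ * ‖b‖ := abs_real_inner_le_norm k b
      have h3 : ‖k‖ ≤ |R| := h1.trans (le_abs_self R)
      have := mul_le_mul_of_nonneg_right h3 hbpos.le
      calc |β k| = 2 * π * |(inner ℝ k b : ℝ)| := by
            rw [hβ]; rw [abs_mul]
            congr 1
            exact abs_of_nonneg (by positivity)
        _ ≤ 2 * π * (‖k‖ * ‖b‖) := by
            apply mul_le_mul_of_nonneg_left h2 (by positivity)
        _ ≤ 2 * π * (|R| * ‖b‖) := by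
            apply mul_le_mul_of_nonneg_left (by nlinarith) (by positivity)
        _ = 2 * π * |R| * ‖b‖ := by ring
  have hkey : ∀ t : ℝ, L t = 𝓕⁻ F (c + t • b) := by
    intro t
    rw [Real.fourierInv_eq']
    rw [hL]
    refine integral_congr_ae (Filter.Eventually.of_forall fun k => ?_)
    simp only [smul_eq_mul]
    congr 1
    have hinner : (inner ℝ k (c + t • b) : ℝ) = (inner ℝ k c : ℝ) + t * (inner ℝ k b : ℝ) := by
      rw [inner_add_right, real_inner_smul_right]
    rw [hinner, hα, hβ]
    push_cast
    ring
  have hLz : ∀ t : ℝ, 0 ≤ t → t ≤ ε / (2 * ‖b‖) → L t = 0 := by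
    intro t ht1 ht2
    rw [hkey t]
    apply hzero
    rw [Metric.mem_ball, dist_eq_norm]
    have : c + t • b - c = t • b := by abel
    rw [this, norm_smul, Real.norm_eq_abs, _root_.abs_of_nonneg ht1]
    calc t * ‖b‖ ≤ ε / (2 * ‖b‖) * ‖b‖ := mul_le_mul_of_nonneg_right ht2 (norm_nonneg _)
      _ = ε / 2 := by field_simp
      _ < ε := by linarith
  have h1 : L 1 = 0 := FP_entire_zero hLd (by positivity) hLz 1
  have h2 : L ((1:ℝ):ℂ) = 𝓕⁻ F (c + (1:ℝ) • b) := hkey 1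
  rw [show ((1:ℝ):ℂ) = 1 by norm_num, h1] at h2
  have : c + (1:ℝ) • b = x := by rw [one_smul, hb]; abel
  rw [this] at h2
  exact h2.symm

lemma FP_bandlimited_zero_everywhere {S : Set (EuclideanSpace ℝ (Fin N))} (hS : IsCompact S)
    {F : EuclideanSpace ℝ (Fin N) → ℂ} (hF : Integrable F) (hFS : ∀ k, k ∉ S → F k = 0)
    {D : Set (EuclideanSpace ℝ (Fin N))} (hDint : (interior D).Nonempty)
    (hz : ∀ᵐ x, x ∈ D → 𝓕⁻ F x = 0) (x : EuclideanSpace ℝ (Fin N)) : 𝓕⁻ F x = 0 := by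
  have hGcont : Continuous (𝓕⁻ F) := by
    apply VectorFourier.fourierIntegral_continuous Real.continuous_fourierChar
      (by exact (continuous_inner.neg :
        Continuous fun p : EuclideanSpace ℝ (Fin N) × EuclideanSpace ℝ (Fin N) =>
          -(inner ℝ p.1 p.2 : ℝ))) hF
  obtain ⟨c, hc⟩ := hDint
  obtain ⟨ε, hε, hball⟩ := Metric.isOpen_iff.1 isOpen_interior c hc
  obtain ⟨R, hRS⟩ := isBounded_iff_forall_norm_le.1 hS.isBounded
  have hR : ∀ k, F k ≠ 0 → ‖k‖ ≤ R := by
    intro k hk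
    by_contra hnk
    exact hk (hFS k fun hkS => hnk (hRS k hkS))
  refine FP_fourierInv_zero_everywhere hF hR (c := c) hε (fun v hv => ?_) x
  exact FP_cont_eq_zero_on_interior hGcont hz (hball hv)

end FPAuxSection


/-- The Hilbert space `L²(ℝᴺ; ℂ)` of square-integrable functions on `ℝᴺ`. -/
abbrev L2Space (N : ℕ) : Type :=
  Lp ℂ 2 (volume : Measure (EuclideanSpace ℝ (Fin N)))

/-- `f ∈ L²(ℝᴺ)` is bandlimited to `S`: its Fourier transform vanishes (a.e.) outside `S`;
equivalently, `f` agrees a.e. with the inverse Fourier transform of an integrable function `F`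
vanishing outside `S`. -/
def IsBandlimited {N : ℕ} (S : Set (EuclideanSpace ℝ (Fin N))) (f : L2Space N) : Prop :=
  ∃ F : EuclideanSpace ℝ (Fin N) → ℂ,
    Integrable F ∧ (∀ k, k ∉ S → F k = 0) ∧
      (f : EuclideanSpace ℝ (Fin N) → ℂ) =ᵐ[volume] 𝓕⁻ F

/-- Multiplication of `f ∈ L²` by the indicator function `χ_D`, as an element of `L²`. -/
def chiMul {N : ℕ} {D : Set (EuclideanSpace ℝ (Fin N))} (hD : MeasurableSet D)
    (f : L2Space N) : L2Space N :=
  ((Lp.memLp f).indicator hD).toLp (D.indicator f)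

/-- The orthogonal projection of `L²(ℝᴺ)` onto a closed subspace `K`. -/
def projOf {N : ℕ} (K : Submodule ℂ (L2Space N)) (hK : IsClosed (K : Set (L2Space N))) :
    L2Space N → L2Space N :=
  haveI : CompleteSpace K := hK.completeSpace_coe
  fun f => (K.orthogonalProjectionOnto f : L2Space N)

/-- The operator `T_h^{(D)} f = P_S (f + χ_D (h − f))` (single region). -/
def Tsingle {N : ℕ} (K : Submodule ℂ (L2Space N)) (hK : IsClosed (K : Set (L2Space N)))
    {D : Set (EuclideanSpace ℝ (Fin N))} (hD : MeasurableSet D)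
    (h f : L2Space N) : L2Space N :=
  projOf K hK (f + chiMul hD (h - f))

/-- The operator `T_h f = ∑ m, ω m • P_S (f + χ_{D m} (h − f))` (multiple weighted regions). -/
def Tmulti {N : ℕ} (K : Submodule ℂ (L2Space N)) (hK : IsClosed (K : Set (L2Space N)))
    {M : ℕ} {D : Fin M → Set (EuclideanSpace ℝ (Fin N))} (hD : ∀ m, MeasurableSet (D m))
    (ω : Fin M → ℝ) (h f : L2Space N) : L2Space N :=
  ∑ m, ω m • projOf K hK (f + chiMul (hD m) (h - f))

lemma chiMul_zero {N : ℕ} {D : Set (EuclideanSpace ℝ (Fin N))} (hD : MeasurableSet D) :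
    chiMul hD (0 : L2Space N) = 0 := by
  rw [chiMul, ← MemLp.toLp_zero (E := ℂ)
    (MemLp.zero (p := (2:ENNReal)) (μ := (volume : Measure (EuclideanSpace ℝ (Fin N)))))]
  apply MemLp.toLp_congr
  filter_upwards [Lp.coeFn_zero ℂ 2 (volume : Measure (EuclideanSpace ℝ (Fin N)))] with x hx
  by_cases hxD : x ∈ D
  · rw [Set.indicator_of_mem hxD]; simpa using hx
  · rw [Set.indicator_of_notMem hxD]; rfl

lemma chiMul_coeFn {N : ℕ} {D : Set (EuclideanSpace ℝ (Fin N))} (hD : MeasurableSet D)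
    (f : L2Space N) : (chiMul hD f : EuclideanSpace ℝ (Fin N) → ℂ) =ᵐ[volume]
      D.indicator (f : EuclideanSpace ℝ (Fin N) → ℂ) :=
  MemLp.coeFn_toLp _

/-- For `h ∈ B_S`, bounded measurable sets `D_1, …, D_M` each with nonempty
interior, and convex weights `ω_m ∈ (0,1]` with `∑ ω_m = 1`, the function `h` is the unique
fixed point of `T_h f = ∑ m, ω_m P_S(f + χ_{D_m}(h − f))` in `B_S`. -/
theorem fixedPoint_unique_multi (N : ℕ) (hN : 1 ≤ N)
    (S : Set (EuclideanSpace ℝ (Fin N))) (hS : IsCompact S)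
    (K : Submodule ℂ (L2Space N))
    (hKset : (K : Set (L2Space N)) = {f : L2Space N | IsBandlimited S f})
    (hK : IsClosed (K : Set (L2Space N)))
    (h : L2Space N) (hh : IsBandlimited S h)
    (M : ℕ) (D : Fin M → Set (EuclideanSpace ℝ (Fin N))) (hD : ∀ m, MeasurableSet (D m))
    (hDbdd : ∀ m, Bornology.IsBounded (D m)) (hDint : ∀ m, (interior (D m)).Nonempty)
    (ω : Fin M → ℝ) (hω : ∀ m, ω m ∈ Set.Ioc (0 : ℝ) 1) (hωsum : ∑ m, ω m = 1) :
    Tmulti K hK hD ω h h = h ∧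
      ∀ f : L2Space N, IsBandlimited S f → Tmulti K hK hD ω h f = f → f = h := by
  haveI : CompleteSpace K := hK.completeSpace_coe
  have hhK : h ∈ K := by rw [← SetLike.mem_coe, hKset]; exact hh
  have hPid : ∀ u, u ∈ K → projOf K hK u = u := fun u hu =>
    K.starProjection_eq_self_iff.mpr hu
  constructor
  · -- fixed point
    unfold Tmulti
    rw [sub_self]
    calc ∑ m, ω m • projOf K hK (h + chiMul (hD m) 0)
        = ∑ m, ω m • h := by
          refine Finset.sum_congr rfl fun m _ => ?_
          rw [chiMul_zero, add_zero, hPid h hhK]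
      _ = (∑ m, ω m) • h := (Finset.sum_smul).symm
      _ = h := by rw [hωsum, one_smul]
  · -- uniqueness
    intro f hf hfix
    have hfK : f ∈ K := by rw [← SetLike.mem_coe, hKset]; exact hf
    have hgK : h - f ∈ K := K.sub_mem hhK hfK
    have hPadd : ∀ u v : L2Space N, projOf K hK (u + v) = projOf K hK u + projOf K hK v := by
      intro u v
      show ((K.orthogonalProjectionOnto (u + v) : K) : L2Space N) = _
      rw [map_add]
      rfl
    -- key equation
    have key : ∑ m, ω m • projOf K hK (chiMul (hD m) (h - f)) = 0 := by
      have h1 : ∑ m, ω m • (f + projOf K hK (chiMul (hD m) (h - f))) = f := by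
        calc ∑ m, ω m • (f + projOf K hK (chiMul (hD m) (h - f)))
            = ∑ m, ω m • projOf K hK (f + chiMul (hD m) (h - f)) := by
              refine Finset.sum_congr rfl fun m _ => ?_
              rw [hPadd, hPid f hfK]
          _ = f := hfix
      have h2 : ∑ m, ω m • (f + projOf K hK (chiMul (hD m) (h - f)))
          = f + ∑ m, ω m • projOf K hK (chiMul (hD m) (h - f)) := by
        simp only [smul_add, Finset.sum_add_distrib, ← Finset.sum_smul, hωsum, one_smul]
      rw [h2] at h1
      exact (add_eq_left).1 h1
    -- take inner product with g = h - f
    have hadj : ∀ u : L2Space N, (inner ℂ (projOf K hK u) (h - f) : ℂ) = inner ℂ u (h - f) := by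
      intro u
      have h1 := Submodule.inner_starProjection_left_eq_right (𝕜 := ℂ) K u (h - f)
      rw [K.starProjection_eq_self_iff.mpr hgK] at h1
      exact h1
    have hinner0 : (inner ℂ (∑ m, ω m • projOf K hK (chiMul (hD m) (h - f))) (h - f) : ℂ) = 0 := by
      rw [key, inner_zero_left]
    rw [sum_inner] at hinner0
    have hterm : ∀ m : Fin M, (inner ℂ (ω m • projOf K hK (chiMul (hD m) (h - f))) (h - f) : ℂ)
        = (ω m : ℂ) * inner ℂ (chiMul (hD m) (h - f)) (h - f) := by
      intro m
      rw [RCLike.real_smul_eq_coe_smul (K := ℂ) (ω m), inner_smul_real_left, hadj,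
        Complex.real_smul]
    rw [Finset.sum_congr rfl fun m _ => hterm m] at hinner0
    -- identify the real parts as set integrals of ‖g‖²
    have hip : ∀ m : Fin M, (inner ℂ (chiMul (hD m) (h - f)) (h - f) : ℂ)
        = ∫ x, (D m).indicator
            (fun x => (inner ℂ (((h - f) : L2Space N) x) (((h - f) : L2Space N) x) : ℂ)) x := by
      intro m
      rw [MeasureTheory.L2.inner_def]
      refine integral_congr_ae ?_
      filter_upwards [chiMul_coeFn (hD m) (h - f)] with x hx
      rw [hx]
      by_cases hxD : x ∈ D m
      · rw [Set.indicator_of_mem hxD, Set.indicator_of_mem hxD]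
      · rw [Set.indicator_of_notMem hxD, Set.indicator_of_notMem hxD]
        exact inner_zero_left _
    have hIntInner : Integrable (fun x =>
        (inner ℂ (((h - f) : L2Space N) x) (((h - f) : L2Space N) x) : ℂ)) volume :=
      MeasureTheory.L2.integrable_inner (𝕜 := ℂ) (h - f) (h - f)
    have hre : ∀ m : Fin M, (inner ℂ (chiMul (hD m) (h - f)) (h - f) : ℂ).re
        = ∫ x, (D m).indicator (fun x => ‖((h - f) : L2Space N) x‖ ^ 2) x := by
      intro m
      rw [hip m, ← RCLike.re_to_complex, ← integral_re (hIntInner.indicator (hD m))]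
      refine integral_congr_ae (Filter.Eventually.of_forall fun x => ?_)
      by_cases hxD : x ∈ D m
      · simp only [Set.indicator_of_mem hxD]
        exact inner_self_eq_norm_sq _
      · simp only [Set.indicator_of_notMem hxD]
        simp
    -- each set integral vanishes
    have hnonneg : ∀ (m : Fin M) (x : EuclideanSpace ℝ (Fin N)),
        0 ≤ (D m).indicator (fun x => ‖((h - f) : L2Space N) x‖ ^ 2) x := fun m x =>
      Set.indicator_nonneg (fun y _ => sq_nonneg _) x
    have hsumre : ∑ m, ω m * (inner ℂ (chiMul (hD m) (h - f)) (h - f) : ℂ).re = 0 := by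
      have h4 : ∑ m, ω m * (inner ℂ (chiMul (hD m) (h - f)) (h - f) : ℂ).re
          = (∑ m, ((ω m : ℂ) * inner ℂ (chiMul (hD m) (h - f)) (h - f))).re := by
        rw [Complex.re_sum]
        exact Finset.sum_congr rfl fun m _ => (Complex.re_ofReal_mul _ _).symm
      rw [h4, hinner0, Complex.zero_re]
    have hzero : ∀ m : Fin M,
        ∫ x, (D m).indicator (fun x => ‖((h - f) : L2Space N) x‖ ^ 2) x = 0 := by
      intro m
      have hterms := (Finset.sum_eq_zero_iff_of_nonneg (fun m _ => ?_)).1 hsumre m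
        (Finset.mem_univ m)
      · have hωm := (hω m).1
        have := hterms
        rw [hre m] at this
        rcases mul_eq_zero.1 this with hc | hc
        · exact absurd hc (ne_of_gt hωm)
        · exact hc
      · rw [hre m]
        have : 0 ≤ ∫ x, (D m).indicator (fun x => ‖((h - f) : L2Space N) x‖ ^ 2) x :=
          integral_nonneg (hnonneg m)
        exact mul_nonneg (hω m).1.le this
    -- pick a region
    have hM : 0 < M := by
      rcases Nat.eq_zero_or_pos M with hM0 | hM0
      · subst hM0; simp at hωsum
      · exact hM0
    set m0 : Fin M := ⟨0, hM⟩
    have hIndInt : Integrable (fun x => (D m0).indicator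
        (fun x => ‖((h - f) : L2Space N) x‖ ^ 2) x) volume := by
      refine Integrable.indicator ?_ (hD m0)
      exact (hIntInner.re).congr (Filter.Eventually.of_forall fun x =>
        inner_self_eq_norm_sq _)
    have haeind : (fun x => (D m0).indicator (fun x => ‖((h - f) : L2Space N) x‖ ^ 2) x)
        =ᵐ[volume] 0 :=
      (integral_eq_zero_iff_of_nonneg (hnonneg m0) hIndInt).1 (hzero m0)
    have haeD : ∀ᵐ x, x ∈ D m0 → ((h - f) : L2Space N) x = 0 := by
      filter_upwards [haeind] with x hx hxD
      rw [Set.indicator_of_mem hxD] at hx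
      have hnrm : ‖((h - f) : L2Space N) x‖ ^ 2 = 0 := hx
      have : ‖((h - f) : L2Space N) x‖ = 0 := by
        nlinarith [norm_nonneg (((h - f) : L2Space N) x), sq_nonneg (‖((h - f) : L2Space N) x‖)]
      exact norm_eq_zero.1 this
    have hgband : IsBandlimited S (h - f) := by
      have hmem := hgK
      rw [← SetLike.mem_coe, hKset] at hmem
      exact hmem
    obtain ⟨F, hFint, hFS, hgF⟩ := hgband
    have hzF : ∀ᵐ x, x ∈ D m0 → 𝓕⁻ F x = 0 := by
      filter_upwards [haeD, hgF] with x h1 h2 hxD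
      rw [← h2]
      exact h1 hxD
    have hFzero : ∀ x, 𝓕⁻ F x = 0 :=
      FP_bandlimited_zero_everywhere hS hFint hFS (hDint m0) hzF
    have hg0 : h - f = 0 := by
      rw [Lp.eq_zero_iff_ae_eq_zero]
      filter_upwards [hgF] with x hx
      rw [Pi.zero_apply, hx]
      exact hFzero x
    exact (sub_eq_zero.1 hg0).symm
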